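/- Let a > 0 and define h^±(t) = φ(t)(cosh(πt/a) ± i sinh(πt/a)) for t ∈ ℝ, where φ is the normalized Gaussian. Then there exists a nonzero constant c ∈ ℂ (depending only on a) such that the Bargmann transforms of h^± are given by B h^±(z) = c · (1 ∓ i + (1 ± i) e^{πz/a}) e^{-πz/(2a)} for all z ∈ ℂ. -/
import Mathlib


open MeasureTheory Complex

/-- The Bargmann transform of `f : ℝ → ℂ`:
`Bf(z) = 2^{1/4} ∫ f(t) e^{2πtz - πt² - (π/2)z²} dt`. -/
noncomputable def bargmannTransform (f : ℝ → ℂ) (z : ℂ) : ℂ :=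
  (((2 : ℝ) ^ ((1 : ℝ) / 4) : ℝ) : ℂ) *
    ∫ t : ℝ, f t * Complex.exp (2 * (Real.pi : ℂ) * (t : ℂ) * z -
      (Real.pi : ℂ) * (t : ℂ) ^ 2 - (Real.pi : ℂ) / 2 * z ^ 2)

/-- The normalized Gaussian `φ(t) = 2^{1/4} e^{-πt²}`. -/
noncomputable def normGaussian (t : ℝ) : ℂ :=
  (((2 : ℝ) ^ ((1 : ℝ) / 4) * Real.exp (-Real.pi * t ^ 2) : ℝ) : ℂ)

/-- `h⁺(t) = φ(t)(cosh(πt/a) + i sinh(πt/a))`. -/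
noncomputable def hPlus (a : ℝ) (t : ℝ) : ℂ :=
  normGaussian t *
    ((Real.cosh (Real.pi * t / a) : ℂ) + Complex.I * (Real.sinh (Real.pi * t / a) : ℂ))

/-- `h⁻(t) = φ(t)(cosh(πt/a) - i sinh(πt/a))`. -/
noncomputable def hMinus (a : ℝ) (t : ℝ) : ℂ :=
  normGaussian t *
    ((Real.cosh (Real.pi * t / a) : ℂ) - Complex.I * (Real.sinh (Real.pi * t / a) : ℂ))

lemma gint (c d : ℂ) :
    ∫ t : ℝ, Complex.exp ((-(2 * (Real.pi : ℂ))) * t ^ 2 + c * t + d) =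
      ((Real.pi : ℂ) / (2 * Real.pi)) ^ (1 / 2 : ℂ) * Complex.exp (d + c ^ 2 / (8 * Real.pi)) := by
  have hb : (-(2 * (Real.pi : ℂ))).re < 0 := by simp [Real.pi_pos]
  rw [integral_cexp_quadratic hb c d]
  have hπ : (Real.pi : ℂ) ≠ 0 := Complex.ofReal_ne_zero.2 Real.pi_ne_zero
  congr 2
  · rw [neg_neg]
  · field_simp; ring

lemma barg_aux (a : ℝ) (ha : 0 < a) (A B z : ℂ) :
    bargmannTransform (fun t : ℝ => normGaussian t *
        (A * Complex.exp ((Real.pi : ℂ) * t / a) + B * Complex.exp (-((Real.pi : ℂ) * t / a)))) z =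
      (((2 : ℝ) ^ ((1 : ℝ) / 4) : ℝ) : ℂ) ^ 2 * ((Real.pi : ℂ) / (2 * Real.pi)) ^ (1 / 2 : ℂ) *
        Complex.exp ((Real.pi : ℂ) / (8 * a ^ 2)) *
        (A * Complex.exp ((Real.pi : ℂ) * z / (2 * a)) +
          B * Complex.exp (-((Real.pi : ℂ) * z / (2 * a)))) := by
  have hπ : (Real.pi : ℂ) ≠ 0 := Complex.ofReal_ne_zero.2 Real.pi_ne_zero
  have ha' : (a : ℂ) ≠ 0 := Complex.ofReal_ne_zero.2 ha.ne'
  have hpt : ∀ t : ℝ, (normGaussian t *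
        (A * Complex.exp ((Real.pi : ℂ) * t / a) + B * Complex.exp (-((Real.pi : ℂ) * t / a)))) *
        Complex.exp (2 * (Real.pi : ℂ) * (t : ℂ) * z -
          (Real.pi : ℂ) * (t : ℂ) ^ 2 - (Real.pi : ℂ) / 2 * z ^ 2) =
      (((2 : ℝ) ^ ((1 : ℝ) / 4) : ℝ) : ℂ) *
        (A * Complex.exp ((-(2 * (Real.pi : ℂ))) * t ^ 2 +
            (2 * Real.pi * z + Real.pi / a) * t + (-((Real.pi : ℂ) / 2) * z ^ 2)) +
         B * Complex.exp ((-(2 * (Real.pi : ℂ))) * t ^ 2 +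
            (2 * Real.pi * z - Real.pi / a) * t + (-((Real.pi : ℂ) / 2) * z ^ 2))) := by
    intro t
    rw [normGaussian, Complex.ofReal_mul, Complex.ofReal_exp]
    rw [show ((-Real.pi * t ^ 2 : ℝ) : ℂ) = -(Real.pi : ℂ) * (t : ℂ) ^ 2 by push_cast; ring]
    rw [show (-(2 * (Real.pi : ℂ))) * t ^ 2 + (2 * Real.pi * z + Real.pi / a) * t +
          (-((Real.pi : ℂ) / 2) * z ^ 2)
        = -(Real.pi : ℂ) * (t : ℂ) ^ 2 + ((Real.pi : ℂ) * t / a +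
          (2 * (Real.pi : ℂ) * (t : ℂ) * z - (Real.pi : ℂ) * (t : ℂ) ^ 2 -
            (Real.pi : ℂ) / 2 * z ^ 2)) by ring]
    rw [show (-(2 * (Real.pi : ℂ))) * t ^ 2 + (2 * Real.pi * z - Real.pi / a) * t +
          (-((Real.pi : ℂ) / 2) * z ^ 2)
        = -(Real.pi : ℂ) * (t : ℂ) ^ 2 + (-((Real.pi : ℂ) * t / a) +
          (2 * (Real.pi : ℂ) * (t : ℂ) * z - (Real.pi : ℂ) * (t : ℂ) ^ 2 -
            (Real.pi : ℂ) / 2 * z ^ 2)) by ring]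
    simp only [Complex.exp_add]
    ring
  have hbneg : (-(2 * (Real.pi : ℂ))).re < 0 := by simp [Real.pi_pos]
  have int1 := integrable_cexp_quadratic' hbneg (2 * Real.pi * z + Real.pi / a)
      (-((Real.pi : ℂ) / 2) * z ^ 2)
  have int2 := integrable_cexp_quadratic' hbneg (2 * Real.pi * z - Real.pi / a)
      (-((Real.pi : ℂ) / 2) * z ^ 2)
  rw [bargmannTransform]
  simp only [hpt]
  rw [integral_const_mul, integral_add (int1.const_mul A) (int2.const_mul B),
    integral_const_mul, integral_const_mul, gint, gint]
  have e1 : (-((Real.pi : ℂ) / 2) * z ^ 2 + (2 * Real.pi * z + Real.pi / a) ^ 2 / (8 * Real.pi)) =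
      (Real.pi : ℂ) / (8 * a ^ 2) + (Real.pi : ℂ) * z / (2 * a) := by
    field_simp; ring
  have e2 : (-((Real.pi : ℂ) / 2) * z ^ 2 + (2 * Real.pi * z - Real.pi / a) ^ 2 / (8 * Real.pi)) =
      (Real.pi : ℂ) / (8 * a ^ 2) + -((Real.pi : ℂ) * z / (2 * a)) := by
    field_simp; ring
  rw [e1, e2, Complex.exp_add, Complex.exp_add]
  ring

/-- There is a nonzero constant `c` (depending only on `a`) such that
`Bh^±(z) = c (1 ∓ i + (1 ± i) e^{πz/a}) e^{-πz/(2a)}` for all `z ∈ ℂ`. -/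
theorem bargmann_hPlus_hMinus (a : ℝ) (ha : 0 < a) :
    ∃ c : ℂ, c ≠ 0 ∧
      (∀ z : ℂ, bargmannTransform (hPlus a) z =
        c * ((1 - Complex.I) + (1 + Complex.I) * Complex.exp ((Real.pi : ℂ) * z / a)) *
          Complex.exp (-(Real.pi : ℂ) * z / (2 * a))) ∧
      (∀ z : ℂ, bargmannTransform (hMinus a) z =
        c * ((1 + Complex.I) + (1 - Complex.I) * Complex.exp ((Real.pi : ℂ) * z / a)) *
          Complex.exp (-(Real.pi : ℂ) * z / (2 * a))) := by
  have hπ : (Real.pi : ℂ) ≠ 0 := Complex.ofReal_ne_zero.2 Real.pi_ne_zero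
  have ha' : (a : ℂ) ≠ 0 := Complex.ofReal_ne_zero.2 ha.ne'
  refine ⟨(((2 : ℝ) ^ ((1 : ℝ) / 4) : ℝ) : ℂ) ^ 2 * ((Real.pi : ℂ) / (2 * Real.pi)) ^ (1 / 2 : ℂ) *
      Complex.exp ((Real.pi : ℂ) / (8 * a ^ 2)) / 2, ?_, ?_, ?_⟩
  · apply div_ne_zero _ two_ne_zero
    apply mul_ne_zero (mul_ne_zero _ _) (Complex.exp_ne_zero _)
    · exact pow_ne_zero _ (Complex.ofReal_ne_zero.2 (by positivity))
    · intro h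
      rcases (Complex.cpow_eq_zero_iff _ _).1 h with ⟨h1, -⟩
      exact (div_ne_zero hπ (mul_ne_zero two_ne_zero hπ)) h1
  · intro z
    have hfun : hPlus a = fun t : ℝ => normGaussian t *
        ((1 + Complex.I) / 2 * Complex.exp ((Real.pi : ℂ) * t / a) +
         (1 - Complex.I) / 2 * Complex.exp (-((Real.pi : ℂ) * t / a))) := by
      funext t
      rw [hPlus, Real.cosh_eq, Real.sinh_eq]
      push_cast
      ring
    rw [hfun, barg_aux a ha]
    rw [show Complex.exp ((Real.pi : ℂ) * z / (2 * a)) =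
        Complex.exp ((Real.pi : ℂ) * z / a) * Complex.exp (-(Real.pi : ℂ) * z / (2 * a)) by
      rw [← Complex.exp_add]; congr 1; field_simp; ring]
    rw [show Complex.exp (-((Real.pi : ℂ) * z / (2 * a))) =
        Complex.exp (-(Real.pi : ℂ) * z / (2 * a)) by congr 1; ring]
    ring
  · intro z
    have hfun : hMinus a = fun t : ℝ => normGaussian t *
        ((1 - Complex.I) / 2 * Complex.exp ((Real.pi : ℂ) * t / a) +
         (1 + Complex.I) / 2 * Complex.exp (-((Real.pi : ℂ) * t / a))) := by
      funext t
      rw [hMinus, Real.cosh_eq, Real.sinh_eq]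
      push_cast
      ring
    rw [hfun, barg_aux a ha]
    rw [show Complex.exp ((Real.pi : ℂ) * z / (2 * a)) =
        Complex.exp ((Real.pi : ℂ) * z / a) * Complex.exp (-(Real.pi : ℂ) * z / (2 * a)) by
      rw [← Complex.exp_add]; congr 1; field_simp; ring]
    rw [show Complex.exp (-((Real.pi : ℂ) * z / (2 * a))) =
        Complex.exp (-(Real.pi : ℂ) * z / (2 * a)) by congr 1; ring]
    ring
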